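/- Let P be a finite poset partitioned into three chains T1, T2, T3 such that whenever p and q lie in different chains and p < q, we have P = ↑p ∪ ↓q. Then P is an ordinal sum R1 ⊕ ... ⊕ Rn where each Ri either is disjoint from one of the three chains, or satisfies: any two elements of Ri lying in different chains are incomparable. -/

import Mathlib

namespace DDproof

open Relation

attribute [local instance] Classical.propDecidable

variable {P : Type*} [PartialOrder P]

/-- incomparability -/
def ic (x y : P) : Prop := ¬ x ≤ y ∧ ¬ y ≤ x

lemma ic_symm {x y : P} (h : ic x y) : ic y x := ⟨h.2, h.1⟩
lemma ic_ne {x y : P} (h : ic x y) : x ≠ y := fun e => h.1 e.le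

/-- connectivity in the incomparability graph -/
def con (x y : P) : Prop := ReflTransGen (ic (P := P)) x y

lemma con_refl (x : P) : con x x := ReflTransGen.refl
lemma ic_con {x y : P} (h : ic x y) : con x y := ReflTransGen.single h
lemma con_trans {x y z : P} (h : con x y) (h' : con y z) : con x z := ReflTransGen.trans h h'
lemma con_symm {x y : P} (h : con x y) : con y x :=
  by haveI : Std.Symm (ic (P := P)) := ⟨fun _ _ hh => ic_symm hh⟩; exact Relation.ReflTransGen.symmetric.symm _ _ h

lemma L1 {x y : P} (hxy : x < y) (hn : ¬ con x y) :
    ∀ {e : P}, con y e → x < e ∧ ¬ con x e := by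
  intro e he
  induction he with
  | refl => exact ⟨hxy, hn⟩
  | @tail b c h1 h2 ih =>
    obtain ⟨hxb, hnxb⟩ := ih
    have hnxc : ¬ con x c := fun hc => hnxb (con_trans hc (ic_con (ic_symm h2)))
    refine ⟨?_, hnxc⟩
    by_cases h3 : x ≤ c
    · rcases eq_or_lt_of_le h3 with he2 | hl
      · exact absurd (he2 ▸ con_refl x) hnxc
      · exact hl
    · by_cases h4 : c ≤ x
      · exact absurd (h4.trans hxb.le) h2.2
      · exact absurd (ic_con ⟨h3, h4⟩) hnxc

lemma L1' {x y : P} (hxy : x < y) (hn : ¬ con x y) :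
    ∀ {e : P}, con x e → e < y ∧ ¬ con e y := by
  intro e he
  induction he with
  | refl => exact ⟨hxy, hn⟩
  | @tail b c h1 h2 ih =>
    obtain ⟨hby, hnby⟩ := ih
    have hncy : ¬ con c y := fun hc => hnby (con_trans (ic_con h2) hc)
    refine ⟨?_, hncy⟩
    by_cases h3 : c ≤ y
    · rcases eq_or_lt_of_le h3 with he2 | hl
      · subst he2; exact absurd (con_refl c) hncy
      · exact hl
    · by_cases h4 : y ≤ c
      · exact absurd (hby.le.trans h4) h2.1
      · exact absurd (con_symm (ic_con ⟨h4, h3⟩)) hncy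

lemma L2 {x y x' y' : P} (h : x < y) (hn : ¬ con x y) (hx : con x x') (hy : con y y') :
    x' < y' := by
  obtain ⟨h1, hn1⟩ := L1 h hn hy
  exact (L1' h1 hn1 hx).1

lemma con_between {x y m : P} (h : con x y) (h1 : x ≤ m) (h2 : m ≤ y) : con x m := by
  by_cases hc : con x m
  · exact hc
  rcases eq_or_lt_of_le h1 with rfl | hlt
  · exact absurd (con_refl x) hc
  · exact absurd ((L1' hlt hc h).1.trans_le h2) (lt_irrefl _)

/-- setoid of incomparability-components -/
def pSetoid (P : Type*) [PartialOrder P] : Setoid P :=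
  ⟨con, ⟨con_refl, fun h => con_symm h, fun h h' => con_trans h h'⟩⟩

lemma qle_trans {x y z : P} :
    (con x y ∨ x < y) → (con y z ∨ y < z) → (con x z ∨ x < z) := by
  rintro (h | h) (h' | h')
  · exact Or.inl (con_trans h h')
  · by_cases hc : con y z
    · exact Or.inl (con_trans h hc)
    · exact Or.inr (L2 h' hc (con_symm h) (con_refl z))
  · by_cases hc : con x y
    · exact Or.inl (con_trans hc h')
    · exact Or.inr (L2 h hc (con_refl x) h')
  · exact Or.inr (h.trans h')

lemma qle_antisymm {x y : P} :
    (con x y ∨ x < y) → (con y x ∨ y < x) → con x y := by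
  rintro (h | h) (h' | h')
  · exact h
  · exact h
  · exact con_symm h'
  · exact absurd h' (lt_asymm h)

lemma qle_total (x y : P) : (con x y ∨ x < y) ∨ (con y x ∨ y < x) := by
  by_cases hc : con x y
  · exact Or.inl (Or.inl hc)
  by_cases h1 : x ≤ y
  · refine Or.inl (Or.inr (lt_of_le_of_ne h1 ?_))
    rintro rfl; exact hc (con_refl x)
  by_cases h2 : y ≤ x
  · refine Or.inr (Or.inr (lt_of_le_of_ne h2 ?_))
    rintro rfl; exact hc (con_refl _)
  · exact absurd (ic_con ⟨h1, h2⟩) hc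

lemma qle_wd (a b c d : P) (h : con a c) (h' : con b d) :
    (con a b ∨ a < b) = (con c d ∨ c < d) := by
  apply propext
  constructor
  · rintro (hh | hh)
    · exact Or.inl (con_trans (con_symm h) (con_trans hh h'))
    · by_cases hc : con a b
      · exact Or.inl (con_trans (con_symm h) (con_trans hc h'))
      · exact Or.inr (L2 hh hc h h')
  · rintro (hh | hh)
    · exact Or.inl (con_trans h (con_trans hh (con_symm h')))
    · by_cases hc : con c d
      · exact Or.inl (con_trans h (con_trans hc (con_symm h')))
      · exact Or.inr (L2 hh hc (con_symm h) (con_symm h'))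

noncomputable def qLO (P : Type*) [PartialOrder P] :
    LinearOrder (Quotient (pSetoid P)) where
  le := Quotient.lift₂ (fun x y => con x y ∨ x < y) qle_wd
  lt a b := (Quotient.lift₂ (fun x y => con x y ∨ x < y) qle_wd a b) ∧
    ¬ (Quotient.lift₂ (fun x y => con x y ∨ x < y) qle_wd b a)
  le_refl q := Quotient.inductionOn q (fun x => Or.inl (con_refl x))
  le_trans a b c := Quotient.inductionOn₃ a b c (fun _ _ _ h h' => qle_trans h h')
  le_antisymm a b := Quotient.inductionOn₂ a b
    (fun _ _ h h' => Quotient.sound (qle_antisymm h h'))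
  le_total a b := Quotient.inductionOn₂ a b (fun x y => qle_total x y)
  lt_iff_le_not_ge _ _ := Iff.rfl
  toDecidableLE _ _ := Classical.propDecidable _
  toDecidableEq _ _ := Classical.propDecidable _
  toDecidableLT _ _ := Classical.propDecidable _

set_option linter.unusedSectionVars false

variable (T₁ T₂ T₃ : Set P)

def inS (T : Set P) : Prop := T = T₁ ∨ T = T₂ ∨ T = T₃

def diffC (x y : P) : Prop :=
  ∃ T T', inS T₁ T₂ T₃ T ∧ inS T₁ T₂ T₃ T' ∧ T ≠ T' ∧ x ∈ T ∧ y ∈ T'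

structure Hyp : Prop where
  cover : T₁ ∪ T₂ ∪ T₃ = Set.univ
  d12 : Disjoint T₁ T₂
  d13 : Disjoint T₁ T₃
  d23 : Disjoint T₂ T₃
  dd : ∀ p q : P, diffC T₁ T₂ T₃ p q → p < q → ∀ r : P, p ≤ r ∨ r ≤ q

variable {T₁ T₂ T₃}

lemma Hyp.mem_chain (H : Hyp T₁ T₂ T₃) (x : P) : ∃ T, inS T₁ T₂ T₃ T ∧ x ∈ T := by
  have hx : x ∈ T₁ ∪ T₂ ∪ T₃ := by rw [H.cover]; trivial
  rcases hx with (h | h) | h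
  · exact ⟨T₁, Or.inl rfl, h⟩
  · exact ⟨T₂, Or.inr (Or.inl rfl), h⟩
  · exact ⟨T₃, Or.inr (Or.inr rfl), h⟩

lemma Hyp.disj (H : Hyp T₁ T₂ T₃) {T T' : Set P} (h : inS T₁ T₂ T₃ T)
    (h' : inS T₁ T₂ T₃ T') (hne : T ≠ T') : Disjoint T T' := by
  rcases h with rfl | rfl | rfl <;> rcases h' with rfl | rfl | rfl <;>
    first
      | exact absurd rfl hne
      | exact H.d12
      | exact H.d13
      | exact H.d23
      | exact H.d12.symm
      | exact H.d13.symm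
      | exact H.d23.symm

lemma Hyp.not_mem (H : Hyp T₁ T₂ T₃) {T T' : Set P} (h : inS T₁ T₂ T₃ T)
    (h' : inS T₁ T₂ T₃ T') (hne : T ≠ T') {x : P} (hx : x ∈ T) : x ∉ T' :=
  Set.disjoint_left.mp (H.disj h h' hne) hx

lemma Hyp.factB (H : Hyp T₁ T₂ T₃) {x y m : P} (hd : diffC T₁ T₂ T₃ x y)
    (hxy : x < y) (h1 : ic m x) (h2 : ic m y) : False := by
  rcases H.dd x y hd hxy m with h | h
  · exact h1.2 h
  · exact h2.1 h

/-- there is a function-indexed incomparability path between connected points -/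
lemma path_of_con {x y : P} (h : con x y) :
    ∃ (k : ℕ) (u : ℕ → P), u 0 = x ∧ u k = y ∧ ∀ i < k, ic (u i) (u (i + 1)) := by
  induction h with
  | refl => exact ⟨0, fun _ => x, rfl, rfl, fun i hi => absurd hi (by omega)⟩
  | @tail b c h1 h2 ih =>
    obtain ⟨k, u, h0, hk, hadj⟩ := ih
    refine ⟨k + 1, fun j => if j = k + 1 then c else u j, by simp [h0], by simp, ?_⟩
    intro i hi
    by_cases hik : i = k
    · subst hik
      simp only [if_pos rfl, if_neg (by omega : ¬ i = i + 1)]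
      exact hk ▸ h2
    · have h1' : ¬ (i = k + 1) := by omega
      have h2' : ¬ (i + 1 = k + 1) := by omega
      simp only [if_neg h1', if_neg h2']
      exact hadj i (by omega)

/-- minimal alternating path between elements of two distinct chains, staying in those chains -/
lemma minpath (H : Hyp T₁ T₂ T₃) {Tc Te : Set P} (hc : inS T₁ T₂ T₃ Tc)
    (he : inS T₁ T₂ T₃ Te) (hne : Tc ≠ Te) {r e : P} (hr : r ∈ Tc) (he' : e ∈ Te)
    (hcon : con r e) :
    ∃ (k : ℕ) (u : ℕ → P), 0 < k ∧ u 0 = r ∧ u k = e ∧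
      (∀ i < k, ic (u i) (u (i + 1))) ∧ (∀ i ≤ k, u i ∈ Tc ∨ u i ∈ Te) := by
  classical
  have hΦ : ∃ k : ℕ, ∃ u : ℕ → P, u 0 = r ∧ u k = e ∧ ∀ i < k, ic (u i) (u (i + 1)) := by
    obtain ⟨k, u, h0, hk, hadj⟩ := path_of_con hcon
    exact ⟨k, u, h0, hk, hadj⟩
  set k := Nat.find hΦ with hkdef
  obtain ⟨u, h0, hk, hadj⟩ := Nat.find_spec hΦ
  rw [← hkdef] at hk hadj
  have hkpos : 0 < k := by
    rcases Nat.eq_zero_or_pos k with h | h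
    · exfalso
      have : r = e := by rw [← h0, ← hk, h]
      exact H.not_mem hc he hne hr (this ▸ he')
    · exact h
  -- minimality: no shortcut / no repeat at distance two
  have gap : ∀ i, i + 2 ≤ k → ¬ ic (u i) (u (i + 2)) ∧ u i ≠ u (i + 2) := by
    intro i hi
    constructor
    · intro hic
      have hΦ' : ∃ u' : ℕ → P, u' 0 = r ∧ u' (k - 1) = e ∧
          ∀ j < k - 1, ic (u' j) (u' (j + 1)) := by
        refine ⟨fun j => if j ≤ i then u j else u (j + 1), ?_, ?_, ?_⟩
        · simp [Nat.zero_le, h0]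
        · have hgt : ¬ (k - 1 ≤ i) := by omega
          have harr : k - 1 + 1 = k := by omega
          simp only [if_neg hgt, harr, hk]
        · intro j hj
          by_cases hji : j < i
          · have e1 : j ≤ i := by omega
            have e2 : j + 1 ≤ i := by omega
            simp only [if_pos e1, if_pos e2]
            exact hadj j (by omega)
          · by_cases hje : j = i
            · subst hje
              simp only [if_pos (le_refl j), if_neg (by omega : ¬ (j + 1 ≤ j))]
              exact hic
            · have e1 : ¬ (j ≤ i) := by omega
              have e2 : ¬ (j + 1 ≤ i) := by omega
              simp only [if_neg e1, if_neg e2]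
              exact hadj (j + 1) (by omega)
      exact Nat.find_min hΦ (by omega) hΦ'
    · intro heq
      have hΦ' : ∃ u' : ℕ → P, u' 0 = r ∧ u' (k - 2) = e ∧
          ∀ j < k - 2, ic (u' j) (u' (j + 1)) := by
        refine ⟨fun j => if j ≤ i then u j else u (j + 2), ?_, ?_, ?_⟩
        · simp [Nat.zero_le, h0]
        · by_cases hik : i = k - 2
          · have e1 : k - 2 ≤ i := by omega
            simp only [if_pos e1]
            have e3 : i + 2 = k := by omega
            calc u (k - 2) = u i := by rw [hik]
              _ = u (i + 2) := heq
              _ = e := by rw [e3, hk]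
          · have e1 : ¬ (k - 2 ≤ i) := by omega
            have e2 : k - 2 + 2 = k := by omega
            simp only [if_neg e1, e2, hk]
        · intro j hj
          by_cases hji : j < i
          · have e1 : j ≤ i := by omega
            have e2 : j + 1 ≤ i := by omega
            simp only [if_pos e1, if_pos e2]
            exact hadj j (by omega)
          · by_cases hje : j = i
            · subst hje
              simp only [if_pos (le_refl j), if_neg (by omega : ¬ (j + 1 ≤ j))]
              rw [heq]
              exact hadj (j + 2) (by omega)
            · have e1 : ¬ (j ≤ i) := by omega
              have e2 : ¬ (j + 1 ≤ i) := by omega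
              simp only [if_neg e1, if_neg e2]
              exact hadj (j + 2) (by omega)
      exact Nat.find_min hΦ (by omega) hΦ'
  -- distance-two vertices lie in the same chain
  have gapc : ∀ i, i + 2 ≤ k → ∀ T T', inS T₁ T₂ T₃ T → inS T₁ T₂ T₃ T' →
      u i ∈ T → u (i + 2) ∈ T' → T = T' := by
    intro i hi T T' hT hT' hm hm'
    by_contra hne'
    obtain ⟨hnic, hneq⟩ := gap i hi
    have hcomp : u i ≤ u (i + 2) ∨ u (i + 2) ≤ u i := by
      by_contra hcc
      push_neg at hcc
      exact hnic ⟨hcc.1, hcc.2⟩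
    have hm1 : ic (u (i + 1)) (u i) := ic_symm (hadj i (by omega))
    have hm2 : ic (u (i + 1)) (u (i + 2)) := hadj (i + 1) (by omega)
    rcases hcomp with hle | hle
    · exact H.factB ⟨T, T', hT, hT', hne', hm, hm'⟩ (lt_of_le_of_ne hle hneq) hm1 hm2
    · exact H.factB ⟨T', T, hT', hT, Ne.symm hne', hm', hm⟩
        (lt_of_le_of_ne hle (Ne.symm hneq)) hm2 hm1
  -- even positions are in Tc
  have heven : ∀ j, 2 * j ≤ k → u (2 * j) ∈ Tc := by
    intro j
    induction j with
    | zero => intro _; simpa [h0] using hr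
    | succ j ih =>
      intro hj
      have hprev : u (2 * j) ∈ Tc := ih (by omega)
      obtain ⟨T, hTS, hmem⟩ := H.mem_chain (u (2 * j + 2))
      have heqT : Tc = T := gapc (2 * j) (by omega) Tc T hc hTS hprev hmem
      have harr : 2 * (j + 1) = 2 * j + 2 := by omega
      rw [harr, heqT]
      exact hmem
  -- k is odd
  have hkodd : k % 2 = 1 := by
    by_contra hpar
    have hke : k = 2 * (k / 2) := by omega
    have : u k ∈ Tc := by rw [hke]; exact heven (k / 2) (by omega)
    exact H.not_mem hc he hne (hk ▸ this) he'
  -- odd positions are in the chain of u 1, which is Te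
  obtain ⟨T1, hT1S, hT1⟩ := H.mem_chain (u 1)
  have hodd : ∀ j, 2 * j + 1 ≤ k → u (2 * j + 1) ∈ T1 := by
    intro j
    induction j with
    | zero => intro _; simpa using hT1
    | succ j ih =>
      intro hj
      have hprev : u (2 * j + 1) ∈ T1 := ih (by omega)
      obtain ⟨T, hTS, hmem⟩ := H.mem_chain (u (2 * j + 1 + 2))
      have heqT : T1 = T := gapc (2 * j + 1) (by omega) T1 T hT1S hTS hprev hmem
      have harr : 2 * (j + 1) + 1 = 2 * j + 1 + 2 := by omega
      rw [harr, heqT]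
      exact hmem
  have hT1e : T1 = Te := by
    obtain ⟨j, hj⟩ : ∃ j, k = 2 * j + 1 := ⟨k / 2, by omega⟩
    have hmem : u k ∈ T1 := by rw [hj]; exact hodd j (by omega)
    by_contra hne'
    exact H.not_mem hT1S he hne' (hk ▸ hmem) he'
  refine ⟨k, u, hkpos, h0, hk, hadj, ?_⟩
  intro i hi
  rcases Nat.even_or_odd i with ⟨j, hj⟩ | ⟨j, hj⟩
  · left
    have : i = 2 * j := by omega
    rw [this]; exact heven j (by omega)
  · right
    have : i = 2 * j + 1 := by omega
    rw [this, ← hT1e]; exact hodd j (by omega)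

lemma D1 (H : Hyp T₁ T₂ T₃) {Ta Tb Tc : Set P} {a b r : P}
    (hSa : inS T₁ T₂ T₃ Ta) (hSb : inS T₁ T₂ T₃ Tb) (hSc : inS T₁ T₂ T₃ Tc)
    (hab : Ta ≠ Tb) (hca : Tc ≠ Ta) (hcb : Tc ≠ Tb)
    (ha : a ∈ Ta) (hb : b ∈ Tb) (hr : r ∈ Tc) (hlt : a < b) (hcon : con r a) :
    r < b := by
  obtain ⟨k, u, hkpos, h0, hk, hadj, pos⟩ := minpath H hSc hSa hca hr ha hcon
  have des : ∀ j ≤ k, u (k - j) < b := by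
    intro j
    induction j with
    | zero => intro _; simpa [hk] using hlt
    | succ j ih =>
      intro hj1
      have ihv : u (k - j) < b := ih (by omega)
      have hdc : diffC T₁ T₂ T₃ (u (k - j)) b := by
        rcases pos (k - j) (by omega) with h | h
        · exact ⟨Tc, Tb, hSc, hSb, hcb, h, hb⟩
        · exact ⟨Ta, Tb, hSa, hSb, hab, h, hb⟩
      have hic : ic (u (k - (j + 1))) (u (k - (j + 1) + 1)) := hadj _ (by omega)
      have harr : k - (j + 1) + 1 = k - j := by omega
      rw [harr] at hic
      rcases H.dd _ _ hdc ihv (u (k - (j + 1))) with h | h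
      · exact absurd h hic.2
      · rcases lt_or_eq_of_le h with h' | h'
        · exact h'
        · exfalso
          rcases pos (k - (j + 1)) (by omega) with hm | hm
          · exact H.not_mem hSc hSb hcb hm (h' ▸ hb)
          · exact H.not_mem hSa hSb hab hm (h' ▸ hb)
  have := des k le_rfl
  simpa [h0] using this

lemma D2 (H : Hyp T₁ T₂ T₃) {Ta Tb Tc : Set P} {a b r : P}
    (hSa : inS T₁ T₂ T₃ Ta) (hSb : inS T₁ T₂ T₃ Tb) (hSc : inS T₁ T₂ T₃ Tc)
    (hab : Ta ≠ Tb) (hca : Tc ≠ Ta) (hcb : Tc ≠ Tb)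
    (ha : a ∈ Ta) (hb : b ∈ Tb) (hr : r ∈ Tc) (hlt : a < b) (hcon : con r b) :
    a < r := by
  obtain ⟨k, u, hkpos, h0, hk, hadj, pos⟩ := minpath H hSc hSb hcb hr hb hcon
  have des : ∀ j ≤ k, a < u (k - j) := by
    intro j
    induction j with
    | zero => intro _; simpa [hk] using hlt
    | succ j ih =>
      intro hj1
      have ihv : a < u (k - j) := ih (by omega)
      have hdc : diffC T₁ T₂ T₃ a (u (k - j)) := by
        rcases pos (k - j) (by omega) with h | h
        · exact ⟨Ta, Tc, hSa, hSc, Ne.symm hca, ha, h⟩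
        · exact ⟨Ta, Tb, hSa, hSb, hab, ha, h⟩
      have hic : ic (u (k - (j + 1))) (u (k - (j + 1) + 1)) := hadj _ (by omega)
      have harr : k - (j + 1) + 1 = k - j := by omega
      rw [harr] at hic
      rcases H.dd _ _ hdc ihv (u (k - (j + 1))) with h | h
      · rcases lt_or_eq_of_le h with h' | h'
        · exact h'
        · exfalso
          rcases pos (k - (j + 1)) (by omega) with hm | hm
          · exact H.not_mem hSc hSa (Ne.symm (Ne.symm hca)) hm (h' ▸ ha)
          · exact H.not_mem hSb hSa (Ne.symm hab) hm (h' ▸ ha)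
      · exact absurd h hic.1
  have := des k le_rfl
  simpa [h0] using this

lemma desc [Fintype P] (H : Hyp T₁ T₂ T₃) :
    ∀ (N : ℕ) (x y : P), x < y → diffC T₁ T₂ T₃ x y →
      (Finset.univ.filter fun z => x < z ∧ z < y).card ≤ N →
      ∃ a b, x ≤ a ∧ b ≤ y ∧ a < b ∧ diffC T₁ T₂ T₃ a b ∧ ∀ m, ¬ (a < m ∧ m < b) := by
  intro N
  induction N with
  | zero =>
    intro x y hxy hdc hcard
    refine ⟨x, y, le_rfl, le_rfl, hxy, hdc, ?_⟩
    intro m ⟨h1, h2⟩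
    have hm : m ∈ Finset.univ.filter fun z => x < z ∧ z < y :=
      Finset.mem_filter.mpr ⟨Finset.mem_univ m, h1, h2⟩
    have : (Finset.univ.filter fun z => x < z ∧ z < y).card = 0 := by omega
    rw [Finset.card_eq_zero] at this
    rw [this] at hm
    exact absurd hm (Finset.notMem_empty m)
  | succ N ih =>
    intro x y hxy hdc hcard
    by_cases hmid : ∃ m, x < m ∧ m < y
    · obtain ⟨m, h1, h2⟩ := hmid
      obtain ⟨Tm, hTmS, hmm⟩ := H.mem_chain m
      obtain ⟨T, T', hTS, hT'S, hTT', hxT, hyT'⟩ := hdc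
      have hmemm : m ∈ Finset.univ.filter fun z => x < z ∧ z < y :=
        Finset.mem_filter.mpr ⟨Finset.mem_univ m, h1, h2⟩
      by_cases heT : Tm = T
      · -- recurse on (m, y)
        have hdc' : diffC T₁ T₂ T₃ m y := ⟨T, T', hTS, hT'S, hTT', heT ▸ hmm, hyT'⟩
        have hsub : (Finset.univ.filter fun z => m < z ∧ z < y) ⊆
            Finset.univ.filter fun z => x < z ∧ z < y := by
          intro z hz
          rw [Finset.mem_filter] at hz ⊢
          exact ⟨hz.1, h1.trans hz.2.1, hz.2.2⟩
        have hnot : m ∉ Finset.univ.filter fun z => m < z ∧ z < y := by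
          rw [Finset.mem_filter]
          rintro ⟨-, hmlt, -⟩
          exact lt_irrefl m hmlt
        have hlt' : (Finset.univ.filter fun z => m < z ∧ z < y).card <
            (Finset.univ.filter fun z => x < z ∧ z < y).card :=
          Finset.card_lt_card ((Finset.ssubset_iff_of_subset hsub).mpr ⟨m, hmemm, hnot⟩)
        obtain ⟨a, b, hma, hby, hab', hdcab, hcov⟩ := ih m y h2 hdc' (by omega)
        exact ⟨a, b, h1.le.trans hma, hby, hab', hdcab, hcov⟩
      · -- recurse on (x, m)
        have hdc' : diffC T₁ T₂ T₃ x m := ⟨T, Tm, hTS, hTmS, fun q => heT q.symm, hxT, hmm⟩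
        have hsub : (Finset.univ.filter fun z => x < z ∧ z < m) ⊆
            Finset.univ.filter fun z => x < z ∧ z < y := by
          intro z hz
          rw [Finset.mem_filter] at hz ⊢
          exact ⟨hz.1, hz.2.1, hz.2.2.trans h2⟩
        have hnot : m ∉ Finset.univ.filter fun z => x < z ∧ z < m := by
          rw [Finset.mem_filter]
          rintro ⟨-, -, hmlt⟩
          exact lt_irrefl m hmlt
        have hlt' : (Finset.univ.filter fun z => x < z ∧ z < m).card <
            (Finset.univ.filter fun z => x < z ∧ z < y).card :=
          Finset.card_lt_card ((Finset.ssubset_iff_of_subset hsub).mpr ⟨m, hmemm, hnot⟩)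
        obtain ⟨a, b, hxa, hbm, hab', hdcab, hcov⟩ := ih x m h1 hdc' (by omega)
        exact ⟨a, b, hxa, hbm.trans h2.le, hab', hdcab, hcov⟩
    · exact ⟨x, y, le_rfl, le_rfl, hxy, hdc, fun m c => hmid ⟨m, c⟩⟩

lemma ne_of_disj {A B : Set P} (h : Disjoint A B) (hA : A.Nonempty) : A ≠ B := by
  rintro rfl
  obtain ⟨a, ha⟩ := hA
  exact Set.disjoint_left.mp h ha ha

lemma nocross [Fintype P] (H : Hyp T₁ T₂ T₃) {x y : P} (hxy : x < y)
    (hdc : diffC T₁ T₂ T₃ x y) (hcon : con x y)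
    (h1 : ∃ z, con x z ∧ z ∈ T₁) (h2 : ∃ z, con x z ∧ z ∈ T₂)
    (h3 : ∃ z, con x z ∧ z ∈ T₃) : False := by
  obtain ⟨a, b, hxa, hby, hab, hdcab, hcov⟩ :=
    desc H _ x y hxy hdc le_rfl
  obtain ⟨Ta, Tb, hSa, hSb, hTab, haT, hbT⟩ := hdcab
  have hcxa : con x a := con_between hcon hxa (hab.le.trans hby)
  have hcxb : con x b := con_between hcon (hxa.trans hab.le) hby
  have hne1 : T₁.Nonempty := by obtain ⟨z, _, hz⟩ := h1; exact ⟨z, hz⟩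
  have hne2 : T₂.Nonempty := by obtain ⟨z, _, hz⟩ := h2; exact ⟨z, hz⟩
  have hne3 : T₃.Nonempty := by obtain ⟨z, _, hz⟩ := h3; exact ⟨z, hz⟩
  have key : ∃ Tc, inS T₁ T₂ T₃ Tc ∧ Tc ≠ Ta ∧ Tc ≠ Tb ∧ ∃ z, con x z ∧ z ∈ Tc := by
    rcases hSa with rfl | rfl | rfl <;> rcases hSb with rfl | rfl | rfl
    · exact absurd rfl hTab
    · exact ⟨T₃, Or.inr (Or.inr rfl), ne_of_disj H.d13.symm hne3,
        ne_of_disj H.d23.symm hne3, h3⟩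
    · exact ⟨T₂, Or.inr (Or.inl rfl), ne_of_disj H.d12.symm hne2,
        ne_of_disj H.d23 hne2, h2⟩
    · exact ⟨T₃, Or.inr (Or.inr rfl), ne_of_disj H.d23.symm hne3,
        ne_of_disj H.d13.symm hne3, h3⟩
    · exact absurd rfl hTab
    · exact ⟨T₁, Or.inl rfl, ne_of_disj H.d12 hne1, ne_of_disj H.d13 hne1, h1⟩
    · exact ⟨T₂, Or.inr (Or.inl rfl), ne_of_disj H.d23 hne2,
        ne_of_disj H.d12.symm hne2, h2⟩
    · exact ⟨T₁, Or.inl rfl, ne_of_disj H.d13 hne1, ne_of_disj H.d12 hne1, h1⟩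
    · exact absurd rfl hTab
  obtain ⟨Tc, hSc, hca, hcb, z, hconz, hzc⟩ := key
  have hrb : z < b := D1 H hSa hSb hSc hTab hca hcb haT hbT hzc hab
    (con_trans (con_symm hconz) hcxa)
  have har : a < z := D2 H hSa hSb hSc hTab hca hcb haT hbT hzc hab
    (con_trans (con_symm hconz) hcxb)
  exact hcov z ⟨har, hrb⟩

end DDproof

namespace DDproof
variable {P' : Type*} [PartialOrder P']
lemma qlo_le_mk (x y : P') :
    (qLO P').le (Quotient.mk (pSetoid P') x) (Quotient.mk (pSetoid P') y) ↔ (con x y ∨ x < y) :=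
  Iff.rfl

lemma qlt_implies {x y : P'}
    (h : (qLO P').lt (Quotient.mk (pSetoid P') x) (Quotient.mk (pSetoid P') y)) : x < y := by
  obtain ⟨h1, h2⟩ := h
  rcases (qlo_le_mk x y).mp h1 with h | h
  · exact absurd ((qlo_le_mk y x).mpr (Or.inl (con_symm h))) h2
  · exact h
end DDproof

attribute [-instance] Quotient.instLE_mathlib
attribute [-instance] Quotient.instPreorder

set_option maxHeartbeats 1000000 in
/-- The Daykin–Daykin conjecture: if a finite poset `P` is partitioned into
three chains `T₁, T₂, T₃` such that whenever `p` and `q` lie in different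
chains and `p < q` we have `P = ↑p ∪ ↓q`, then `P` is an ordinal sum
`R 0 ⊕ ⋯ ⊕ R (n-1)` in which each block either misses one of the three
chains, or has any two of its elements lying in different chains incomparable. -/
theorem daykin_daykin {P : Type*} [Fintype P] [PartialOrder P]
    (T₁ T₂ T₃ : Set P)
    (hchain₁ : IsChain (· ≤ ·) T₁) (hchain₂ : IsChain (· ≤ ·) T₂)
    (hchain₃ : IsChain (· ≤ ·) T₃)
    (hcover : T₁ ∪ T₂ ∪ T₃ = Set.univ)
    (hdisj₁₂ : Disjoint T₁ T₂) (hdisj₁₃ : Disjoint T₁ T₃) (hdisj₂₃ : Disjoint T₂ T₃)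
    (hDD : ∀ p q : P, (∃ T T' , T ∈ ({T₁, T₂, T₃} : Set (Set P)) ∧
        T' ∈ ({T₁, T₂, T₃} : Set (Set P)) ∧ T ≠ T' ∧ p ∈ T ∧ q ∈ T') →
      p < q → ∀ r : P, p ≤ r ∨ r ≤ q) :
    ∃ (n : ℕ) (R : Fin n → Set P),
      (∀ x : P, ∃! i, x ∈ R i) ∧
      (∀ i j : Fin n, i < j → ∀ p ∈ R i, ∀ q ∈ R j, p < q) ∧
      (∀ i, (R i ∩ T₁ = ∅ ∨ R i ∩ T₂ = ∅ ∨ R i ∩ T₃ = ∅) ∨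
        ∀ T T', T ∈ ({T₁, T₂, T₃} : Set (Set P)) → T' ∈ ({T₁, T₂, T₃} : Set (Set P)) →
          T ≠ T' → ∀ p ∈ R i ∩ T, ∀ q ∈ R i ∩ T', ¬ p ≤ q ∧ ¬ q ≤ p) := by
  classical
  have H : DDproof.Hyp T₁ T₂ T₃ := by
    refine ⟨hcover, hdisj₁₂, hdisj₁₃, hdisj₂₃, ?_⟩
    intro p q hd hlt r
    refine hDD p q ?_ hlt r
    obtain ⟨T, T', hT, hT', hne, hp, hq⟩ := hd
    refine ⟨T, T', ?_, ?_, hne, hp, hq⟩ <;>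
      simp only [Set.mem_insert_iff, Set.mem_singleton_iff] <;>
      first
        | exact hT
        | exact hT'
  letI : LinearOrder (Quotient (DDproof.pSetoid P)) := DDproof.qLO P
  letI : Fintype (Quotient (DDproof.pSetoid P)) := Quotient.fintype _
  set e := monoEquivOfFin (Quotient (DDproof.pSetoid P)) rfl with he
  refine ⟨Fintype.card (Quotient (DDproof.pSetoid P)),
    fun i => {x | Quotient.mk (DDproof.pSetoid P) x = e i}, ?_, ?_, ?_⟩
  · -- partition
    intro x
    refine ⟨e.symm (Quotient.mk (DDproof.pSetoid P) x), ?_, ?_⟩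
    · show Quotient.mk (DDproof.pSetoid P) x = e (e.symm (Quotient.mk _ x))
      exact (e.apply_symm_apply _).symm
    · intro j hj
      have hj' : Quotient.mk (DDproof.pSetoid P) x = e j := hj
      rw [hj']
      exact (e.symm_apply_apply j).symm
  · -- ordering between blocks
    intro i j hij p hp q hq
    have hp' : Quotient.mk (DDproof.pSetoid P) p = e i := hp
    have hq' : Quotient.mk (DDproof.pSetoid P) q = e j := hq
    have helt : e i < e j := e.lt_iff_lt.mpr hij
    rw [← hp', ← hq'] at helt
    have helt2 : (DDproof.qLO P).lt (Quotient.mk (DDproof.pSetoid P) p)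
        (Quotient.mk (DDproof.pSetoid P) q) := helt
    exact DDproof.qlt_implies helt2
  · -- the per-block dichotomy
    intro i
    by_cases hA : {x | Quotient.mk (DDproof.pSetoid P) x = e i} ∩ T₁ = ∅
    · exact Or.inl (Or.inl hA)
    by_cases hB : {x | Quotient.mk (DDproof.pSetoid P) x = e i} ∩ T₂ = ∅
    · exact Or.inl (Or.inr (Or.inl hB))
    by_cases hC : {x | Quotient.mk (DDproof.pSetoid P) x = e i} ∩ T₃ = ∅
    · exact Or.inl (Or.inr (Or.inr hC))
    right
    obtain ⟨z₁, hz₁⟩ := Set.nonempty_iff_ne_empty.mpr hA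
    obtain ⟨z₂, hz₂⟩ := Set.nonempty_iff_ne_empty.mpr hB
    obtain ⟨z₃, hz₃⟩ := Set.nonempty_iff_ne_empty.mpr hC
    intro T T' hT hT' hne p hp q hq
    have hTs : DDproof.inS T₁ T₂ T₃ T := by
      simpa [DDproof.inS, Set.mem_insert_iff, Set.mem_singleton_iff] using hT
    have hT's : DDproof.inS T₁ T₂ T₃ T' := by
      simpa [DDproof.inS, Set.mem_insert_iff, Set.mem_singleton_iff] using hT'
    have hpq : p ≠ q := by
      rintro rfl
      exact DDproof.Hyp.not_mem H hTs hT's hne hp.2 hq.2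
    have hp1 : Quotient.mk (DDproof.pSetoid P) p = e i := hp.1
    have hq1 : Quotient.mk (DDproof.pSetoid P) q = e i := hq.1
    have hz11 : Quotient.mk (DDproof.pSetoid P) z₁ = e i := hz₁.1
    have hz21 : Quotient.mk (DDproof.pSetoid P) z₂ = e i := hz₂.1
    have hz31 : Quotient.mk (DDproof.pSetoid P) z₃ = e i := hz₃.1
    have hconpq : DDproof.con p q := Quotient.exact (hp1.trans hq1.symm)
    have hconp1 : DDproof.con p z₁ := Quotient.exact (hp1.trans hz11.symm)
    have hconp2 : DDproof.con p z₂ := Quotient.exact (hp1.trans hz21.symm)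
    have hconp3 : DDproof.con p z₃ := Quotient.exact (hp1.trans hz31.symm)
    have hconq1 : DDproof.con q z₁ := Quotient.exact (hq1.trans hz11.symm)
    have hconq2 : DDproof.con q z₂ := Quotient.exact (hq1.trans hz21.symm)
    have hconq3 : DDproof.con q z₃ := Quotient.exact (hq1.trans hz31.symm)
    constructor
    · intro hle
      exact DDproof.nocross H (lt_of_le_of_ne hle hpq)
        ⟨T, T', hTs, hT's, hne, hp.2, hq.2⟩ hconpq
        ⟨z₁, hconp1, hz₁.2⟩ ⟨z₂, hconp2, hz₂.2⟩ ⟨z₃, hconp3, hz₃.2⟩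
    · intro hle
      exact DDproof.nocross H (lt_of_le_of_ne hle (Ne.symm hpq))
        ⟨T', T, hT's, hTs, Ne.symm hne, hq.2, hp.2⟩ (DDproof.con_symm hconpq)
        ⟨z₁, hconq1, hz₁.2⟩ ⟨z₂, hconq2, hz₂.2⟩ ⟨z₃, hconq3, hz₃.2⟩
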